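/- Let G be a finite connected simple graph and Ω a potential maximal clique of G. If there is a vertex v ∈ Ω such that no connected component C of G \ Ω satisfies v ∈ N(C), then Ω = N[v]. -/

import Mathlib

open scoped Classical

namespace PaperECC

variable {V : Type*}

/-- `nbhd G X` is N(X): vertices outside `X` with a neighbor in `X`. -/
def nbhd (G : SimpleGraph V) (X : Set V) : Set V :=
  {v | v ∉ X ∧ ∃ u ∈ X, G.Adj u v}

/-- `closedNbhd G X` is N[X] = X ∪ N(X). -/
def closedNbhd (G : SimpleGraph V) (X : Set V) : Set V :=
  X ∪ nbhd G X

/-- closed neighborhood N[v] of a single vertex. -/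
def vNbhd (G : SimpleGraph V) (v : V) : Set V :=
  insert v (G.neighborSet v)

/-- `IsCompOf G X C`: `C` is the vertex set of a connected component of `G \ X`. -/
def IsCompOf (G : SimpleGraph V) (X C : Set V) : Prop :=
  C.Nonempty ∧ Disjoint C X ∧ (G.induce C).Connected ∧
    ∀ u ∈ C, ∀ v, v ∉ X → G.Adj u v → v ∈ C

/-- `C` is a full component of `X`: a component of `G \ X` with N(C) = X. -/
def IsFullCompOf (G : SimpleGraph V) (X C : Set V) : Prop :=
  IsCompOf G X C ∧ nbhd G C = X

/-- `S` is a minimal separator of `G`: it has at least two full components. -/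
def IsMinSep (G : SimpleGraph V) (S : Set V) : Prop :=
  ∃ C D : Set V, C ≠ D ∧ IsFullCompOf G S C ∧ IsFullCompOf G S D

/-- `C` is a block of `G`: a component of `G \ N(C)` whose neighborhood is a minimal separator. -/
def IsBlock (G : SimpleGraph V) (C : Set V) : Prop :=
  IsCompOf G (nbhd G C) C ∧ IsMinSep G (nbhd G C)

/-- `H` is chordal: every (injectively embedded) cycle on at least 4 vertices has a chord,
i.e. there is no induced cycle on four or more vertices. -/
def IsChordal (H : SimpleGraph V) : Prop :=
  ∀ n : ℕ, 4 ≤ n → ∀ f : ZMod n → V, Function.Injective f →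
    (∀ i, H.Adj (f i) (f (i + 1))) →
    ∃ i j : ZMod n, i ≠ j ∧ j ≠ i + 1 ∧ i ≠ j + 1 ∧ H.Adj (f i) (f j)

/-- `H` is a triangulation of `G` (on the same vertex set). -/
def IsTri (G H : SimpleGraph V) : Prop :=
  IsChordal H ∧ G ≤ H

/-- `H` is a minimal triangulation of `G`. -/
def IsMinTri (G H : SimpleGraph V) : Prop :=
  IsTri G H ∧ ∀ H' : SimpleGraph V, IsTri G H' → H' ≤ H → H' = H

/-- `Ω` is a maximal clique of `H`. -/
def IsMaxClique (H : SimpleGraph V) (Ω : Set V) : Prop :=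
  H.IsClique Ω ∧ ∀ Ω' : Set V, H.IsClique Ω' → Ω ⊆ Ω' → Ω' = Ω

/-- `Ω` is a potential maximal clique of `G`: a maximal clique of some minimal triangulation. -/
def IsPMC (G : SimpleGraph V) (Ω : Set V) : Prop :=
  ∃ H : SimpleGraph V, IsMinTri G H ∧ IsMaxClique H Ω

/-- `W` is an edge clique cover of `G`: a finite collection of cliques covering all edges. -/
def IsECC (G : SimpleGraph V) (W : Finset (Set V)) : Prop :=
  (∀ K ∈ W, G.IsClique K) ∧ ∀ u v : V, G.Adj u v → ∃ K ∈ W, u ∈ K ∧ v ∈ K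

/-- `W[X]`: the cliques of `W` intersecting the vertex set `X`. -/
noncomputable def meeting (W : Finset (Set V)) (X : Set V) : Finset (Set V) :=
  W.filter (fun K => (K ∩ X).Nonempty)

/-- `V(G, W')`: the vertices all of whose cliques (within `W`) belong to `W'`. -/
def partVerts (W W' : Finset (Set V)) : Set V :=
  {v | ∀ K ∈ W, v ∈ K → K ∈ W'}

/-- The connected components of the subgraph of `G` induced on a vertex set `Y`. -/
def compsOf (G : SimpleGraph V) (Y : Set V) : Set (Set V) :=
  {C | IsCompOf G Yᶜ C}

/-- `C(W')`: the components of the part `W'` of the edge clique cover `W`. -/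
def partComps (G : SimpleGraph V) (W W' : Finset (Set V)) : Set (Set V) :=
  compsOf G (partVerts W W')

/-- `W'` is a good part of `W`: a nonempty subset all of whose components are blocks of `G`. -/
def IsGoodPart (G : SimpleGraph V) (W W' : Finset (Set V)) : Prop :=
  W' ⊆ W ∧ W'.Nonempty ∧ ∀ C ∈ partComps G W W', IsBlock G C

/-- The realization `R(C)` of a block `C`, as a graph supported on `N[C]`:
edges of `G[N[C]]` together with all pairs inside `N(C)`. -/
def realization (G : SimpleGraph V) (C : Set V) : SimpleGraph V where
  Adj u v := u ≠ v ∧ u ∈ closedNbhd G C ∧ v ∈ closedNbhd G C ∧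
    (G.Adj u v ∨ (u ∈ nbhd G C ∧ v ∈ nbhd G C))
  symm := by
    constructor
    intro u v h
    exact ⟨h.1.symm, h.2.2.1, h.2.1, h.2.2.2.elim (fun a => Or.inl a.symm)
      (fun a => Or.inr ⟨a.2, a.1⟩)⟩
  loopless := ⟨fun u h => h.1 rfl⟩

/-- The complete graph on the vertex set `Ω` (supported on `Ω`): all pairs inside `Ω`. -/
def cliqueOn (Ω : Set V) : SimpleGraph V where
  Adj u v := u ≠ v ∧ u ∈ Ω ∧ v ∈ Ω
  symm := ⟨fun u v h => ⟨h.1.symm, h.2.2, h.2.1⟩⟩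
  loopless := ⟨fun u h => h.1 rfl⟩

/-- The induced subgraph `G[A]`, as a graph supported on `A`. -/
def inducedOn (G : SimpleGraph V) (A : Set V) : SimpleGraph V where
  Adj u v := G.Adj u v ∧ u ∈ A ∧ v ∈ A
  symm := ⟨fun u v h => ⟨h.1.symm, h.2.2, h.2.1⟩⟩
  loopless := ⟨fun u h => G.ne_of_adj h.1 rfl⟩

/-- All edges of `H` lie inside the vertex set `A` (i.e. `H` has vertex set `A`). -/
def edgesWithin (H : SimpleGraph V) (A : Set V) : Prop :=
  ∀ u v : V, H.Adj u v → u ∈ A ∧ v ∈ A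

/-- `H` is a triangulation of the graph `G'` with vertex set `A`. -/
def IsTriOn (G' : SimpleGraph V) (A : Set V) (H : SimpleGraph V) : Prop :=
  IsChordal H ∧ G' ≤ H ∧ edgesWithin H A

/-- `H` is a minimal triangulation of the graph `G'` with vertex set `A`. -/
def IsMinTriOn (G' : SimpleGraph V) (A : Set V) (H : SimpleGraph V) : Prop :=
  IsTriOn G' A H ∧ ∀ H' : SimpleGraph V, IsTriOn G' A H' → H' ≤ H → H' = H

/-- `M` is a module of `G`. -/
def IsModule (G : SimpleGraph V) (M : Set V) : Prop :=
  ∀ v ∉ M, (∀ u ∈ M, G.Adj v u) ∨ (∀ u ∈ M, ¬ G.Adj v u)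

/-- The graph `G` with all vertices of `Ω` deleted (as an edge-condition). -/
private def delOut (G : SimpleGraph V) (Ω : Set V) : SimpleGraph V where
  Adj x y := G.Adj x y ∧ x ∉ Ω ∧ y ∉ Ω
  symm := ⟨fun x y h => ⟨h.1.symm, h.2.2, h.2.1⟩⟩
  loopless := ⟨fun x h => G.ne_of_adj h.1 rfl⟩

private lemma delOut_walk_not_mem {G : SimpleGraph V} {Ω : Set V} :
    ∀ {x y : V}, (delOut G Ω).Walk x y → x ∉ Ω → y ∉ Ω
  | _, _, .nil, hx => hx
  | _, _, .cons h p, _ => delOut_walk_not_mem p h.2.2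

private lemma delOut_walk_reach_induce {G : SimpleGraph V} {Ω : Set V} {w : V} :
    ∀ {x y : V}, (delOut G Ω).Walk x y →
      ∀ hx : (delOut G Ω).Reachable w x,
      ∃ hy : (delOut G Ω).Reachable w y,
        (G.induce {z | (delOut G Ω).Reachable w z}).Reachable ⟨x, hx⟩ ⟨y, hy⟩
  | _, _, .nil, hx => ⟨hx, SimpleGraph.Reachable.refl _⟩
  | x, y, .cons (v := z) h p, hx => by
      have hz : (delOut G Ω).Reachable w z := hx.trans ⟨.cons h .nil⟩
      obtain ⟨hy, r⟩ := delOut_walk_reach_induce p hz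
      refine ⟨hy, SimpleGraph.Reachable.trans ?_ r⟩
      exact SimpleGraph.Adj.reachable (by simpa using h.1 :
        (G.induce {z | (delOut G Ω).Reachable w z}).Adj ⟨x, hx⟩ ⟨z, hz⟩)

/-- The component of `G \ Ω` containing a vertex `w ∉ Ω`. -/
private lemma isCompOf_reachSet (G : SimpleGraph V) (Ω : Set V) (w : V) (hw : w ∉ Ω) :
    IsCompOf G Ω {z | (delOut G Ω).Reachable w z} := by
  set C : Set V := {z | (delOut G Ω).Reachable w z} with hC
  have hmem : ∀ z ∈ C, z ∉ Ω := by
    intro z hz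
    obtain ⟨p⟩ := (hz : (delOut G Ω).Reachable w z)
    exact delOut_walk_not_mem p hw
  have hwC : w ∈ C := SimpleGraph.Reachable.refl w
  refine ⟨⟨w, hwC⟩, Set.disjoint_left.2 hmem, ?_, ?_⟩
  · haveI : Nonempty C := ⟨⟨w, hwC⟩⟩
    refine SimpleGraph.Connected.mk ?_
    intro a b
    obtain ⟨x, hx⟩ := a
    obtain ⟨y, hy⟩ := b
    obtain ⟨px⟩ := (hx : (delOut G Ω).Reachable w x)
    obtain ⟨py⟩ := (hy : (delOut G Ω).Reachable w y)
    obtain ⟨hx', rx⟩ := delOut_walk_reach_induce px (SimpleGraph.Reachable.refl w)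
    obtain ⟨hy', ry⟩ := delOut_walk_reach_induce py (SimpleGraph.Reachable.refl w)
    exact rx.symm.trans ry
  · intro u hu x hxΩ hadj
    exact (hu : (delOut G Ω).Reachable w u).trans
      (SimpleGraph.Adj.reachable ⟨hadj, hmem u hu, hxΩ⟩)

/-- `H` with all edges at `v` that are not `G`-edges removed. -/
private def prune (G H : SimpleGraph V) (v : V) : SimpleGraph V where
  Adj x y := H.Adj x y ∧ ((x = v ∨ y = v) → G.Adj x y)
  symm := ⟨fun x y h => ⟨h.1.symm, fun hc => (h.2 hc.symm).symm⟩⟩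
  loopless := ⟨fun x h => H.ne_of_adj h.1 rfl⟩

private lemma prune_chordal {G H : SimpleGraph V} {v : V} {Ω : Set V}
    (hH : IsChordal H) (hcl : H.IsClique Ω)
    (hN : ∀ x, G.Adj v x → x ∈ Ω) : IsChordal (prune G H v) := by
  intro n hn f hf hcyc
  haveI : NeZero n := ⟨by omega⟩
  have hcast : ∀ m : ℕ, 0 < m → m < 4 → (m : ZMod n) ≠ 0 := by
    intro m hm1 hm2 hz
    have := (ZMod.natCast_eq_zero_iff m n).1 hz
    have := Nat.le_of_dvd hm1 this
    omega
  have h1 : (1 : ZMod n) ≠ 0 := by simpa using hcast 1 (by omega) (by omega)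
  have h2 : (2 : ZMod n) ≠ 0 := by simpa using hcast 2 (by omega) (by omega)
  have h3 : (3 : ZMod n) ≠ 0 := by simpa using hcast 3 (by omega) (by omega)
  by_cases hvr : ∃ i, f i = v
  · obtain ⟨i0, hi0⟩ := hvr
    refine ⟨i0 - 1, i0 + 1, ?_, ?_, ?_, ?_⟩
    · intro hE; exact h2 (by linear_combination -hE)
    · intro hE; exact h1 (by linear_combination hE)
    · intro hE; exact h3 (by linear_combination -hE)
    · have hedge1 := hcyc (i0 - 1)
      rw [sub_add_cancel, hi0] at hedge1
      have hedge2 := hcyc i0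
      rw [hi0] at hedge2
      have hGa : G.Adj v (f (i0 - 1)) := (hedge1.2 (Or.inr rfl)).symm
      have hGb : G.Adj v (f (i0 + 1)) := hedge2.2 (Or.inl rfl)
      have haΩ : f (i0 - 1) ∈ Ω := hN _ hGa
      have hbΩ : f (i0 + 1) ∈ Ω := hN _ hGb
      have hne : f (i0 - 1) ≠ f (i0 + 1) := by
        intro hE
        exact h2 (by linear_combination -(hf hE))
      have hav : f (i0 - 1) ≠ v := by
        rw [← hi0]; intro hE; exact h1 (by linear_combination -(hf hE))
      have hbv : f (i0 + 1) ≠ v := by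
        rw [← hi0]; intro hE; exact h1 (by linear_combination hf hE)
      exact ⟨hcl haΩ hbΩ hne, fun hc => absurd hc (by simp [hav, hbv])⟩
  · obtain ⟨i, j, hij, hji, hij', hadj⟩ := hH n hn f hf (fun i => (hcyc i).1)
    refine ⟨i, j, hij, hji, hij', hadj, fun hc => ?_⟩
    rcases hc with hc | hc
    · exact absurd ⟨i, hc⟩ hvr
    · exact absurd ⟨j, hc⟩ hvr

/-- If a PMC `Ω` of a connected graph `G` contains a vertex `v` such that
no component `C` of `G \ Ω` has `v ∈ N(C)`, then `Ω = N[v]`. -/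
theorem pmc_closed_nbhd {V : Type*} [Fintype V] (G : SimpleGraph V) (hG : G.Connected)
    (Ω : Set V) (hΩ : IsPMC G Ω) (v : V) (hv : v ∈ Ω)
    (h : ∀ C : Set V, IsCompOf G Ω C → v ∉ nbhd G C) :
    Ω = vNbhd G v := by
  obtain ⟨H, ⟨⟨hHchord, hGH⟩, hmin⟩, hclique, hmax⟩ := hΩ
  -- Step 1: every G-neighbor of v is in Ω.
  have hN : ∀ x, G.Adj v x → x ∈ Ω := by
    intro x hadj
    by_contra hxΩ
    have hcomp := isCompOf_reachSet G Ω x hxΩ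
    refine h _ hcomp ⟨?_, x, SimpleGraph.Reachable.refl x, hadj.symm⟩
    intro hvC
    obtain ⟨p⟩ := (hvC : (delOut G Ω).Reachable x v)
    exact delOut_walk_not_mem p hxΩ hv
  -- Step 2: prune G H v is a triangulation below H, so it equals H.
  have hprune : prune G H v = H := by
    refine hmin _ ⟨prune_chordal hHchord hclique hN, ?_⟩ (fun x y hxy => hxy.1)
    intro x y hxy
    refine ⟨hGH hxy, fun hc => ?_⟩
    rcases hc with hc | hc
    · exact hc ▸ hxy
    · exact hc ▸ hxy
  -- Conclude.
  ext x
  simp only [vNbhd, Set.mem_insert_iff, SimpleGraph.mem_neighborSet]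
  constructor
  · intro hx
    by_cases hxv : x = v
    · exact Or.inl hxv
    · have hH : H.Adj v x := hclique hv hx (Ne.symm hxv)
      rw [← hprune] at hH
      exact Or.inr (hH.2 (Or.inl rfl))
  · rintro (rfl | hadj)
    · exact hv
    · exact hN x hadj


end PaperECC
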